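/- arXiv:2304.03426 — 2 statements merged into one kernel-verified Lean document; each statement's English description precedes it below -/
import Mathlib

section
/- Let K = {x ∈ ℝ^n : Ax ≥ b} be a bounded polytope with nonempty interior, where A ∈ ℝ^{m×n} has rows a_1ᵀ,…,a_mᵀ and b ∈ ℝ^m, and let vc(K) denote its volumetric center, i.e., the minimizer of F(x) = (1/2) ln det H(x) over the interior of K. Then K ⊆ 2 m^{3/2} n · E(vc(K), H(vc(K))); that is, every y ∈ K satisfies (y − vc(K))ᵀ H(vc(K)) (y − vc(K)) ≤ 4 m³ n². -/
open Matrix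

/-- The Hessian of the log-barrier of the polytope `{x | A x ≥ b}` at the point `x`:
`H(x) = ∑ i, aᵢ aᵢᵀ / (aᵢᵀ x - bᵢ)²`. -/
noncomputable def Hmat {m n : ℕ} (A : Matrix (Fin m) (Fin n) ℝ) (b : Fin m → ℝ)
    (x : Fin n → ℝ) : Matrix (Fin n) (Fin n) ℝ :=
  ∑ i, ((A i ⬝ᵥ x - b i) ^ 2)⁻¹ • Matrix.vecMulVec (A i) (A i)

/-- The volumetric function `F(x) = (1/2) ln det H(x)`. -/
noncomputable def Fvol {m n : ℕ} (A : Matrix (Fin m) (Fin n) ℝ) (b : Fin m → ℝ)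
    (x : Fin n → ℝ) : ℝ :=
  (1 / 2) * Real.log (Hmat A b x).det

namespace VCaux

variable {m n : ℕ}

lemma trace_eq_sum_eigs {X : Matrix (Fin n) (Fin n) ℝ} (hX : X.IsHermitian) :
    X.trace = ∑ i, hX.eigenvalues i := by
  simpa using hX.trace_eq_sum_eigenvalues

lemma posdef_of_quadform {X : Matrix (Fin n) (Fin n) ℝ} (hherm : X.IsHermitian)
    (hq : ∀ z : Fin n → ℝ, z ≠ 0 → 0 < z ⬝ᵥ X *ᵥ z) : X.PosDef := by
  refine PosDef.of_dotProduct_mulVec_pos hherm fun z hz => ?_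
  simpa using hq z hz

lemma transpose_of_herm {X : Matrix (Fin n) (Fin n) ℝ} (hX : X.IsHermitian) : Xᵀ = X := by
  ext i j
  have := congrFun (congrFun hX.eq i) j
  simpa [conjTranspose_apply] using this

open scoped MatrixOrder in
lemma logdet_tangent {P Q : Matrix (Fin n) (Fin n) ℝ} (hP : P.PosDef) (hQ : Q.PosDef) :
    Real.log Q.det ≤ Real.log P.det + ((P⁻¹ * Q).trace - n) := by
  have hPi : (P⁻¹).PosDef := hP.inv
  set R := CFC.sqrt P⁻¹ with hRdef
  have hRps : R.PosSemidef := (CFC.sqrt_nonneg P⁻¹).posSemidef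
  have hRR : R * R = P⁻¹ := CFC.sqrt_mul_sqrt_self P⁻¹ hPi.posSemidef.nonneg
  have hRherm : R.IsHermitian := hRps.1
  have hRsymm : Rᵀ = R := transpose_of_herm hRherm
  set X := R * Q * R with hXdef
  have hRz : ∀ z : Fin n → ℝ, z ≠ 0 → R *ᵥ z ≠ 0 := by
    intro z hz hRz0
    have h1 : P⁻¹ *ᵥ z = 0 := by
      rw [← hRR, ← mulVec_mulVec, hRz0, mulVec_zero]
    have := hPi.re_dotProduct_pos (x := z) hz
    rw [h1] at this
    simp at this
  have hXpd : X.PosDef := by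
    refine posdef_of_quadform ?_ ?_
    · show Xᴴ = X
      rw [hXdef, conjTranspose_mul, conjTranspose_mul, hRherm.eq, hQ.1.eq, mul_assoc]
    · intro z hz
      have h1 : z ⬝ᵥ X *ᵥ z = (R *ᵥ z) ⬝ᵥ Q *ᵥ (R *ᵥ z) := by
        rw [hXdef, ← mulVec_mulVec (M := R * Q) (N := R), ← mulVec_mulVec (M := R) (N := Q),
          dotProduct_mulVec z R, ← Matrix.mulVec_transpose, hRsymm]
      rw [h1]
      have := hQ.re_dotProduct_pos (x := R *ᵥ z) (hRz z hz)
      simpa using this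
  have hXherm : X.IsHermitian := hXpd.1
  have hdet : X.det = P.det⁻¹ * Q.det := by
    have h2 : R.det * R.det = P.det⁻¹ := by
      rw [← det_mul, hRR, det_nonsing_inv, Ring.inverse_eq_inv']
    rw [hXdef, det_mul, det_mul, ← h2]
    ring
  have htr : X.trace = (P⁻¹ * Q).trace := by
    rw [hXdef, trace_mul_cycle, hRR]
  have heigpos : ∀ i, 0 < hXherm.eigenvalues i := fun i => hXpd.eigenvalues_pos i
  have hlogX : Real.log X.det ≤ X.trace - n := by
    have hdet2 : X.det = ∏ i, hXherm.eigenvalues i := by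
      simpa using hXherm.det_eq_prod_eigenvalues
    rw [hdet2, trace_eq_sum_eigs hXherm, Real.log_prod (fun i _ => (heigpos i).ne')]
    calc ∑ i, Real.log (hXherm.eigenvalues i) ≤ ∑ i : Fin n, (hXherm.eigenvalues i - 1) :=
          Finset.sum_le_sum fun i _ => Real.log_le_sub_one_of_pos (heigpos i)
      _ = (∑ i, hXherm.eigenvalues i) - n := by
          rw [Finset.sum_sub_distrib]
          simp
  have hPdet : (0:ℝ) < P.det := hP.det_pos
  have hQdet : (0:ℝ) < Q.det := hQ.det_pos
  have hXQ : Real.log X.det = Real.log Q.det - Real.log P.det := by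
    rw [hdet, Real.log_mul (by positivity) hQdet.ne', Real.log_inv]
    ring
  rw [hXQ, htr] at hlogX
  linarith

lemma vecMulVec_mulVec' (v w x : Fin n → ℝ) :
    vecMulVec v w *ᵥ x = (w ⬝ᵥ x) • v := by
  funext i
  simp only [mulVec, dotProduct, vecMulVec_apply, Pi.smul_apply, smul_eq_mul]
  rw [Finset.sum_mul]
  exact Finset.sum_congr rfl fun j _ => by ring

lemma sum_mulVec' {N : Type*} [Fintype N] (f : N → Matrix (Fin n) (Fin n) ℝ) (z : Fin n → ℝ) :
    (∑ i, f i) *ᵥ z = ∑ i, f i *ᵥ z := by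
  funext j
  simp only [mulVec, dotProduct, Matrix.sum_apply, Finset.sum_apply, Finset.sum_mul]
  rw [Finset.sum_comm]

lemma dotProduct_sum' {N : Type*} [Fintype N] (w : Fin n → ℝ) (f : N → (Fin n → ℝ)) :
    w ⬝ᵥ (∑ i, f i) = ∑ i, w ⬝ᵥ f i := by
  simp only [dotProduct, Finset.sum_apply, Finset.mul_sum]
  rw [Finset.sum_comm]

lemma hmat_quadform (A : Matrix (Fin m) (Fin n) ℝ) (b : Fin m → ℝ) (x z w : Fin n → ℝ) :
    w ⬝ᵥ Hmat A b x *ᵥ z = ∑ i, ((A i ⬝ᵥ x - b i) ^ 2)⁻¹ * ((A i ⬝ᵥ z) * (A i ⬝ᵥ w)) := by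
  rw [Hmat, sum_mulVec', dotProduct_sum']
  refine Finset.sum_congr rfl fun i _ => ?_
  rw [smul_mulVec, vecMulVec_mulVec']
  simp [dotProduct_smul, dotProduct_comm]

lemma hmat_herm (A : Matrix (Fin m) (Fin n) ℝ) (b : Fin m → ℝ) (x : Fin n → ℝ) :
    (Hmat A b x).IsHermitian := by
  show _ = _
  rw [Hmat, conjTranspose_sum]
  refine Finset.sum_congr rfl fun i _ => ?_
  rw [conjTranspose_smul]
  congr 1
  ext j k
  simp [vecMulVec_apply, mul_comm]

lemma trace_mul_vecMulVec (B : Matrix (Fin n) (Fin n) ℝ) (a : Fin n → ℝ) :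
    (B * vecMulVec a a).trace = a ⬝ᵥ B *ᵥ a := by
  simp only [trace, diag, mul_apply, vecMulVec_apply, dotProduct, mulVec, Finset.mul_sum]
  refine Finset.sum_congr rfl fun i _ => Finset.sum_congr rfl fun j _ => by ring

lemma hmat_posdef {A : Matrix (Fin m) (Fin n) ℝ} {b : Fin m → ℝ} {x : Fin n → ℝ}
    (hx : ∀ i, A i ⬝ᵥ x > b i) (hspan : ∀ d : Fin n → ℝ, d ≠ 0 → ∃ i, A i ⬝ᵥ d < 0) :
    (Hmat A b x).PosDef := by
  refine posdef_of_quadform (hmat_herm A b x) fun z hz => ?_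
  rw [hmat_quadform]
  obtain ⟨i, hi⟩ := hspan z hz
  have hsx : ∀ j, 0 < A j ⬝ᵥ x - b j := fun j => sub_pos.mpr (hx j)
  refine Finset.sum_pos' (fun j _ => ?_) ⟨i, Finset.mem_univ i, ?_⟩
  · exact mul_nonneg (by positivity) (mul_self_nonneg _)
  · exact mul_pos (inv_pos.mpr (pow_pos (hsx i) 2)) (mul_pos_of_neg_of_neg hi hi)

end VCaux

open VCaux in
set_option maxHeartbeats 2000000 in
/-- A bounded polytope `K = {x | A x ≥ b}` with nonempty interior is contained in
`2 m^{3/2} n · E(vc(K), H(vc(K)))`, where `vc(K)` is the volumetric center: every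
`y ∈ K` satisfies `(y - vc)ᵀ H(vc) (y - vc) ≤ 4 m³ n²`. -/
theorem polytope_subset_dikin_of_volumetric_center {m n : ℕ}
    (A : Matrix (Fin m) (Fin n) ℝ) (b : Fin m → ℝ)
    (hbd : Bornology.IsBounded {x : Fin n → ℝ | ∀ i, A i ⬝ᵥ x ≥ b i})
    (vc : Fin n → ℝ) (hvc : ∀ i, A i ⬝ᵥ vc > b i)
    (hmin : ∀ x : Fin n → ℝ, (∀ i, A i ⬝ᵥ x > b i) → Fvol A b vc ≤ Fvol A b x)
    (y : Fin n → ℝ) (hy : ∀ i, A i ⬝ᵥ y ≥ b i) :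
    (y - vc) ⬝ᵥ (Hmat A b vc) *ᵥ (y - vc) ≤ 4 * (m : ℝ) ^ 3 * (n : ℝ) ^ 2 := by
  classical
  rcases Nat.eq_zero_or_pos n with hn0 | hn
  · subst hn0
    have h1 : (y - vc) ⬝ᵥ (Hmat A b vc) *ᵥ (y - vc) = 0 := by
      simp [dotProduct]
    rw [h1]
    positivity
  -- Step 1: every nonzero direction has a strictly separating row
  have hray : ∀ d : Fin n → ℝ, d ≠ 0 → ∃ i, A i ⬝ᵥ d < 0 := by
    intro d hd
    by_contra hcon
    push_neg at hcon
    obtain ⟨C, hC⟩ := isBounded_iff_forall_norm_le.mp hbd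
    have hdn : 0 < ‖d‖ := norm_pos_iff.mpr hd
    have hCv : ‖vc‖ ≤ C := hC vc (fun i => le_of_lt (hvc i))
    set τ : ℝ := (C + ‖vc‖ + 1) / ‖d‖ with hτ
    have hτ0 : 0 ≤ τ := by
      apply div_nonneg _ hdn.le
      have : (0:ℝ) ≤ ‖vc‖ := norm_nonneg _
      linarith
    have hmem : vc + τ • d ∈ {x : Fin n → ℝ | ∀ i, A i ⬝ᵥ x ≥ b i} := by
      intro i
      have h1 : A i ⬝ᵥ (vc + τ • d) = A i ⬝ᵥ vc + τ * (A i ⬝ᵥ d) := by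
        rw [dotProduct_add, dotProduct_smul]
        rfl
      have h2 : 0 ≤ τ * (A i ⬝ᵥ d) := mul_nonneg hτ0 (hcon i)
      have := hvc i
      simp only [ge_iff_le]
      rw [h1]
      linarith
    have hb1 := hC _ hmem
    have h3 : ‖τ • d‖ ≤ ‖vc + τ • d‖ + ‖vc‖ := by
      have := norm_add_le (vc + τ • d) (-vc)
      simpa [add_assoc] using this
    rw [norm_smul, Real.norm_eq_abs, abs_of_nonneg hτ0, hτ,
      div_mul_cancel₀ _ hdn.ne'] at h3
    linarith
  -- Step 2: m ≥ 2
  have hm2 : 2 ≤ m := by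
    set d : Fin n → ℝ := Pi.single ⟨0, hn⟩ (1:ℝ) with hddef
    have hd : d ≠ 0 := by
      intro h
      have : d ⟨0, hn⟩ = 1 := Pi.single_eq_same _ _
      rw [h] at this
      simp at this
    obtain ⟨i, hi⟩ := hray d hd
    obtain ⟨j, hj⟩ := hray (-d) (neg_ne_zero.mpr hd)
    rw [dotProduct_neg] at hj
    have hij : i ≠ j := by
      intro h
      rw [h] at hi
      linarith
    have : ({i, j} : Finset (Fin m)).card ≤ m := by
      simpa using Finset.card_le_univ ({i, j} : Finset (Fin m))
    rwa [Finset.card_insert_of_notMem (by simpa using hij), Finset.card_singleton] at this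
  -- setup
  set s : Fin m → ℝ := fun i => A i ⬝ᵥ vc - b i with hsdef
  have hs : ∀ i, 0 < s i := fun i => sub_pos.mpr (hvc i)
  set H : Matrix (Fin n) (Fin n) ℝ := Hmat A b vc with hHdef
  have hH : H.PosDef := hmat_posdef hvc hray
  have hdetH : IsUnit H.det := isUnit_iff_ne_zero.mpr hH.det_pos.ne'
  set Hi : Matrix (Fin n) (Fin n) ℝ := H⁻¹ with hHidef
  have hHi : Hi.PosDef := hH.inv
  have hHHi : H * Hi = 1 := mul_nonsing_inv _ hdetH
  have hHiH : Hi * H = 1 := nonsing_inv_mul _ hdetH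
  set σ : Fin m → ℝ := fun i => ((s i) ^ 2)⁻¹ * (A i ⬝ᵥ Hi *ᵥ A i) with hσdef
  have hA_nonneg : ∀ i, 0 ≤ A i ⬝ᵥ Hi *ᵥ A i := by
    intro i
    have := hHi.posSemidef.dotProduct_mulVec_nonneg (A i)
    simpa using this
  have hσ0 : ∀ i, 0 ≤ σ i := fun i => mul_nonneg (by positivity) (hA_nonneg i)
  -- sum of leverage scores is n
  have hσsum : ∑ i, σ i = n := by
    have h1 : (Hi * H).trace = (n : ℝ) := by
      rw [hHiH, trace_one]
      simp
    have h2 : (Hi * H).trace = ∑ i, σ i := by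
      rw [hHdef, Hmat, Finset.mul_sum, trace_sum]
      refine Finset.sum_congr rfl fun i _ => ?_
      rw [Matrix.mul_smul, trace_smul, smul_eq_mul, trace_mul_vecMulVec]
    rw [← h2, h1]
  -- each leverage score is at most 1
  have hσle1 : ∀ i, σ i ≤ 1 := by
    intro i
    set u : Fin n → ℝ := Hi *ᵥ A i with hudef
    have hHu : H *ᵥ u = A i := by
      rw [hudef, mulVec_mulVec, hHHi, one_mulVec]
    have hq : u ⬝ᵥ H *ᵥ u = A i ⬝ᵥ u := by
      rw [hHu, dotProduct_comm]
    have hlow : ((s i) ^ 2)⁻¹ * ((A i ⬝ᵥ u) * (A i ⬝ᵥ u)) ≤ u ⬝ᵥ H *ᵥ u := by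
      rw [hmat_quadform]
      refine Finset.single_le_sum (f := fun j => ((A j ⬝ᵥ vc - b j) ^ 2)⁻¹ * ((A j ⬝ᵥ u) * (A j ⬝ᵥ u)))
        (fun j _ => mul_nonneg (by positivity) (mul_self_nonneg _)) (Finset.mem_univ i)
    rw [hq] at hlow
    have hc : 0 < ((s i) ^ 2)⁻¹ := inv_pos.mpr (pow_pos (hs i) 2)
    have hAu : 0 ≤ A i ⬝ᵥ u := hA_nonneg i
    show ((s i) ^ 2)⁻¹ * (A i ⬝ᵥ u) ≤ 1
    nlinarith [sq_nonneg (((s i) ^ 2)⁻¹ * (A i ⬝ᵥ u))]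
  -- the direction towards y
  set d : Fin n → ℝ := y - vc with hddef
  set t : Fin m → ℝ := fun i => (A i ⬝ᵥ d) / s i with htdef
  have hAd : ∀ i, A i ⬝ᵥ d = s i * t i := by
    intro i
    rw [htdef]
    exact (mul_div_cancel₀ _ (hs i).ne').symm
  have hdyv : ∀ i, A i ⬝ᵥ d = A i ⬝ᵥ y - A i ⬝ᵥ vc := by
    intro i
    rw [hddef, dotProduct_sub]
  have ht1 : ∀ i, -1 ≤ t i := by
    intro i
    rw [htdef]
    rw [le_div_iff₀ (hs i)]
    have := hy i
    have h2 := hdyv i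
    simp only [hsdef]
    nlinarith [hy i]
  set S : ℝ := d ⬝ᵥ H *ᵥ d with hSdef
  have hS0 : 0 ≤ S := by
    have := hH.posSemidef.dotProduct_mulVec_nonneg d
    simpa [hSdef] using this
  have hSt : S = ∑ i, (t i) ^ 2 := by
    rw [hSdef, hHdef, hmat_quadform]
    refine Finset.sum_congr rfl fun i _ => ?_
    have hne : A i ⬝ᵥ vc - b i ≠ 0 := ne_of_gt (sub_pos.mpr (hvc i))
    simp only [htdef, hsdef]
    field_simp
  -- Cauchy-Schwarz: t i ^ 2 ≤ σ i * S
  have hCS : ∀ i, (t i) ^ 2 ≤ σ i * S := by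
    intro i
    set u : Fin n → ℝ := Hi *ᵥ A i with hudef
    have hHu : H *ᵥ u = A i := by
      rw [hudef, mulVec_mulVec, hHHi, one_mulVec]
    set σ' : ℝ := A i ⬝ᵥ u with hσ'def
    have hσ'0 : 0 ≤ σ' := hA_nonneg i
    set X : ℝ := A i ⬝ᵥ d with hXdef2
    have hexp : ∀ c : ℝ, 0 ≤ S + 2 * c * X + c ^ 2 * σ' := by
      intro c
      have h0 := hH.posSemidef.dotProduct_mulVec_nonneg (d + c • u)
      have h1 : star (d + c • u) ⬝ᵥ H *ᵥ (d + c • u) = S + 2 * c * X + c ^ 2 * σ' := by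
        have hsymm1 : u ⬝ᵥ H *ᵥ d = X := by
          rw [dotProduct_mulVec, ← Matrix.mulVec_transpose,
            transpose_of_herm (hmat_herm A b vc), hHu]
        have hsymm2 : d ⬝ᵥ H *ᵥ u = X := by
          rw [hHu, dotProduct_comm]
        have hsymm3 : u ⬝ᵥ H *ᵥ u = σ' := by
          rw [hHu, dotProduct_comm]
        rw [star_trivial, mulVec_add, mulVec_smul, dotProduct_add, add_dotProduct,
          smul_dotProduct, dotProduct_smul, add_dotProduct, smul_dotProduct]
        rw [show (d ⬝ᵥ H *ᵥ d) = S from rfl] at *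
        simp only [smul_eq_mul]
        rw [hsymm2, hsymm3]
        have : u ⬝ᵥ H *ᵥ d = X := hsymm1
        rw [this]
        ring
      rw [h1] at h0
      exact h0
    have hX2 : X ^ 2 ≤ σ' * S := by
      rcases eq_or_lt_of_le hσ'0 with h0 | hpos
      · -- σ' = 0 forces X = 0
        have hX0 : X = 0 := by
          by_contra hX0
          have h1 := hexp (-(S + 1) / (2 * X))
          rw [← h0] at h1
          have h2 : 2 * (-(S + 1) / (2 * X)) * X = -(S + 1) := by
            field_simp
          rw [h2] at h1
          simp only [mul_zero, add_zero] at h1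
          linarith
        rw [hX0, ← h0]
        norm_num
      · have h1 := hexp (-X / σ')
        have h2 : S - X ^ 2 / σ' = S + 2 * (-X / σ') * X + (-X / σ') ^ 2 * σ' := by
          field_simp
          ring
        have h3 : 0 ≤ S - X ^ 2 / σ' := by rw [h2]; exact h1
        rw [sub_nonneg, div_le_iff₀ hpos] at h3
        linarith [h3]
    have ht2 : (t i) ^ 2 = ((s i) ^ 2)⁻¹ * X ^ 2 := by
      rw [htdef, hXdef2]
      field_simp
    rw [ht2, hσdef]
    have : ((s i) ^ 2)⁻¹ * X ^ 2 ≤ ((s i) ^ 2)⁻¹ * (σ' * S) :=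
      mul_le_mul_of_nonneg_left hX2 (by positivity)
    calc ((s i) ^ 2)⁻¹ * X ^ 2 ≤ ((s i) ^ 2)⁻¹ * (σ' * S) := this
      _ = ((s i) ^ 2)⁻¹ * (A i ⬝ᵥ Hi *ᵥ A i) * S := by rw [hσ'def, hudef]; ring
  -- first-order optimality: ∑ σ i * t i = 0
  have hgrad : ∑ i, σ i * t i = 0 := by
    set T : ℝ := ∑ i, |t i| with hTdef
    have hT0 : 0 ≤ T := Finset.sum_nonneg fun i _ => abs_nonneg _
    have hTi : ∀ i, |t i| ≤ T :=
      fun i => Finset.single_le_sum (fun j _ => abs_nonneg (t j)) (Finset.mem_univ i)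
    set δ : ℝ := (1 + T)⁻¹ with hδdef
    have hδ : 0 < δ := by positivity
    set g : ℝ → ℝ := fun e => ∑ i, σ i * ((1 + e * t i) ^ 2)⁻¹ with hgdef
    have hg0 : g 0 = n := by
      rw [hgdef]
      simpa using hσsum
    have key : ∀ ε : ℝ, |ε| < δ → (n : ℝ) ≤ g ε := by
      intro ε hε
      have hpos : ∀ i, 0 < 1 + ε * t i := by
        intro i
        have h1 : |ε * t i| < 1 := by
          rw [abs_mul]
          calc |ε| * |t i| ≤ |ε| * (1 + T) := by
                have := hTi i
                have := abs_nonneg ε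
                nlinarith
            _ < δ * (1 + T) := by
                apply mul_lt_mul_of_pos_right hε
                positivity
            _ = 1 := by
                rw [hδdef]
                field_simp
        have := neg_abs_le (ε * t i)
        have h2 := abs_lt.mp h1
        linarith [h2.1]
      set x' : Fin n → ℝ := vc + ε • d with hx'def
      have hint : ∀ i, A i ⬝ᵥ x' - b i = s i * (1 + ε * t i) := by
        intro i
        have h1 : A i ⬝ᵥ x' = A i ⬝ᵥ vc + ε * (A i ⬝ᵥ d) := by
          rw [hx'def, dotProduct_add, dotProduct_smul]
          rfl
        rw [h1, hAd i]
        simp only [hsdef]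
        ring
      have hint' : ∀ i, A i ⬝ᵥ x' > b i := by
        intro i
        have := mul_pos (hs i) (hpos i)
        have h2 := hint i
        linarith
      have hQpd : (Hmat A b x').PosDef := hmat_posdef hint' hray
      have hmin' := hmin x' hint'
      have hld := logdet_tangent hH hQpd
      have hlog : Real.log H.det ≤ Real.log (Hmat A b x').det := by
        rw [Fvol, Fvol] at hmin'
        rw [hHdef]
        linarith
      have htr : (H⁻¹ * Hmat A b x').trace = g ε := by
        rw [hgdef]
        conv_lhs => rw [Hmat]
        rw [Finset.mul_sum, trace_sum]
        refine Finset.sum_congr rfl fun i _ => ?_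
        rw [Matrix.mul_smul, trace_smul, smul_eq_mul, trace_mul_vecMulVec, hint i, mul_pow,
          mul_inv]
        have h3 : σ i = ((s i) ^ 2)⁻¹ * (A i ⬝ᵥ Hi *ᵥ A i) := rfl
        rw [h3, hHidef]
        ring
      rw [htr] at hld
      linarith
    have hlm : IsLocalMin g 0 := by
      have hev : ∀ᶠ ε in nhds (0:ℝ), g 0 ≤ g ε := by
        filter_upwards [Metric.ball_mem_nhds (0:ℝ) hδ] with ε hε
        rw [hg0]
        exact key ε (by simpa [Real.dist_eq] using hε)
      exact hev
    have hder : HasDerivAt g (∑ i, σ i * (-(2 * t i))) 0 := by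
      rw [hgdef]
      apply HasDerivAt.fun_sum
      intro i _
      have h1 : HasDerivAt (fun e : ℝ => 1 + e * t i) (t i) 0 := by
        simpa using ((hasDerivAt_id (0:ℝ)).mul_const (t i)).const_add 1
      have h2 := (h1.fun_pow 2).fun_inv (by norm_num)
      have h3 := h2.const_mul (σ i)
      exact h3.congr_deriv (by norm_num)
    have hd0 := hlm.deriv_eq_zero
    rw [hder.deriv] at hd0
    have h4 : ∑ i, σ i * (-(2 * t i)) = -2 * ∑ i, σ i * t i := by
      rw [Finset.mul_sum]
      exact Finset.sum_congr rfl fun i _ => by ring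
    rw [h4] at hd0
    linarith
  -- final combinatorial argument
  clear_value S t σ s Hi H d
  clear hbd hmin hvc hy hray hHHi hHiH hdetH hH hHi hA_nonneg hAd hdyv hσle1 hS0 hsdef
    hHdef hHidef hσdef htdef hddef hSdef A b vc y H Hi d
  by_contra hcon
  push_neg at hcon
  have hm2' : (2 : ℝ) ≤ (m : ℝ) := by exact_mod_cast hm2
  have hn1 : (1 : ℝ) ≤ (n : ℝ) := by exact_mod_cast hn
  have hSpos : 0 < S := by
    have h0 : (0:ℝ) ≤ 4 * (m:ℝ)^3 * (n:ℝ)^2 := by positivity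
    linarith only [hcon, h0]
  set p : Fin m → ℝ := fun i => max (t i) 0 with hpdef
  set q : Fin m → ℝ := fun i => max (-(t i)) 0 with hqdef
  have hp0 : ∀ i, 0 ≤ p i := fun i => le_max_right _ _
  have hq0 : ∀ i, 0 ≤ q i := fun i => le_max_right _ _
  have hpq : ∀ i, t i = p i - q i := by
    intro i
    rcases le_or_gt 0 (t i) with h | h
    · simp [hpdef, hqdef, max_eq_left, h, max_eq_right, neg_nonpos.mpr h]
    · rw [hpdef, hqdef]
      simp only
      rw [max_eq_right h.le, max_eq_left (by linarith : (0:ℝ) ≤ -(t i))]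
      ring
  have hsq : ∀ i, (t i) ^ 2 = (p i) ^ 2 + (q i) ^ 2 := by
    intro i
    rcases le_or_gt 0 (t i) with h | h
    · rw [hpdef, hqdef]
      simp only
      rw [max_eq_left h, max_eq_right (neg_nonpos.mpr h)]
      ring
    · rw [hpdef, hqdef]
      simp only
      rw [max_eq_right h.le, max_eq_left (by linarith : (0:ℝ) ≤ -(t i))]
      ring
  have hq1 : ∀ i, q i ≤ 1 := by
    intro i
    rw [hqdef]
    simp only
    rw [max_le_iff]
    exact ⟨by linarith [ht1 i], by norm_num⟩
  -- sums
  have hQ2 : ∑ i, (q i) ^ 2 ≤ (m : ℝ) := by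
    calc ∑ i, (q i) ^ 2 ≤ ∑ _i : Fin m, (1:ℝ) :=
          Finset.sum_le_sum fun i _ => by nlinarith [hq0 i, hq1 i]
      _ = m := by simp
  have hP2 : S - m ≤ ∑ i, (p i) ^ 2 := by
    have h1 : S = ∑ i, (p i) ^ 2 + ∑ i, (q i) ^ 2 := by
      rw [hSt, ← Finset.sum_add_distrib]
      exact Finset.sum_congr rfl fun i _ => hsq i
    linarith
  have hσpq : ∑ i, σ i * p i ≤ (n : ℝ) := by
    have h1 : ∑ i, σ i * p i = ∑ i, σ i * q i := by
      have h2 : ∑ i, σ i * p i - ∑ i, σ i * q i = ∑ i, σ i * t i := by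
        rw [← Finset.sum_sub_distrib]
        exact Finset.sum_congr rfl fun i _ => by rw [hpq i]; ring
      rw [hgrad] at h2
      linarith
    rw [h1]
    calc ∑ i, σ i * q i ≤ ∑ i, σ i :=
          Finset.sum_le_sum fun i _ => by nlinarith [hσ0 i, hq1 i, hq0 i]
      _ = n := hσsum
  have hP3 : ∑ i, (p i) ^ 3 ≤ (n : ℝ) * S := by
    have h1 : ∀ i, (p i) ^ 3 ≤ σ i * p i * S := by
      intro i
      rcases le_or_gt 0 (t i) with h | h
      · have hpt : p i = t i := max_eq_left h
        have := hCS i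
        rw [hpt]
        nlinarith
      · have hpt : p i = 0 := max_eq_right h.le
        rw [hpt]
        have := hσ0 i
        nlinarith
    calc ∑ i, (p i) ^ 3 ≤ ∑ i, σ i * p i * S := Finset.sum_le_sum fun i _ => h1 i
      _ = (∑ i, σ i * p i) * S := by rw [← Finset.sum_mul]
      _ ≤ (n : ℝ) * S := mul_le_mul_of_nonneg_right hσpq hSpos.le
  have hCS1 : (∑ i, (p i) ^ 2) ^ 2 ≤ (∑ i, p i) * ∑ i, (p i) ^ 3 := by
    have h1 := Finset.sum_mul_sq_le_sq_mul_sq Finset.univ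
      (fun i => Real.sqrt (p i)) (fun i => p i * Real.sqrt (p i))
    have h2 : ∀ i, Real.sqrt (p i) * (p i * Real.sqrt (p i)) = (p i) ^ 2 := by
      intro i
      have := Real.mul_self_sqrt (hp0 i)
      nlinarith
    have h3 : ∀ i, (Real.sqrt (p i)) ^ 2 = p i := fun i => Real.sq_sqrt (hp0 i)
    have h4 : ∀ i, (p i * Real.sqrt (p i)) ^ 2 = (p i) ^ 3 := by
      intro i
      rw [mul_pow, Real.sq_sqrt (hp0 i)]
      ring
    calc (∑ i, (p i) ^ 2) ^ 2
        = (∑ i, Real.sqrt (p i) * (p i * Real.sqrt (p i))) ^ 2 := by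
          congr 1
          exact Finset.sum_congr rfl fun i _ => (h2 i).symm
      _ ≤ (∑ i, (Real.sqrt (p i)) ^ 2) * ∑ i, (p i * Real.sqrt (p i)) ^ 2 := h1
      _ = (∑ i, p i) * ∑ i, (p i) ^ 3 := by
          congr 1
          · exact Finset.sum_congr rfl fun i _ => h3 i
          · exact Finset.sum_congr rfl fun i _ => h4 i
  have hCS2 : (∑ i, p i) ^ 2 ≤ (m : ℝ) * ∑ i, (p i) ^ 2 := by
    have h1 := Finset.sum_mul_sq_le_sq_mul_sq Finset.univ (fun _ : Fin m => (1:ℝ))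
      (fun i => p i)
    simpa using h1
  -- put it together
  set P1 : ℝ := ∑ i, p i with hP1def
  set P2 : ℝ := ∑ i, (p i) ^ 2 with hP2def
  set P3 : ℝ := ∑ i, (p i) ^ 3 with hP3def
  have hP1nn : 0 ≤ P1 := Finset.sum_nonneg fun i _ => hp0 i
  have hP3nn : 0 ≤ P3 := Finset.sum_nonneg fun i _ => pow_nonneg (hp0 i) 3
  have hm0 : (0:ℝ) < (m:ℝ) := by linarith
  have hMle : (m : ℝ) ≤ S / 2 := by
    have h1 : 4 * (m:ℝ) ≤ (m:ℝ)^3 := by nlinarith [sq_nonneg ((m:ℝ) - 2)]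
    have h2 : (m:ℝ)^3 ≤ (m:ℝ)^3 * (n:ℝ)^2 := by
      nlinarith [pow_pos hm0 3, sq_nonneg ((n:ℝ) - 1)]
    linarith
  have hP2ge : S / 2 ≤ P2 := by linarith
  have hP2pos : 0 < P2 := by linarith
  -- P2^4 ≤ P1^2 * P3^2 ≤ (m * P2) * (n * S)^2
  have h5 : P2 ^ 4 ≤ (m : ℝ) * P2 * ((n : ℝ) * S) ^ 2 := by
    have h6 : P2 ^ 4 ≤ (P1 * P3) ^ 2 := by nlinarith [mul_nonneg hP1nn hP3nn]
    have h7 : (P1 * P3) ^ 2 = P1 ^ 2 * P3 ^ 2 := by ring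
    have h8 : P1 ^ 2 * P3 ^ 2 ≤ ((m : ℝ) * P2) * ((n : ℝ) * S) ^ 2 := by
      have h9 : P3 ^ 2 ≤ ((n : ℝ) * S) ^ 2 := by nlinarith
      have h10 : 0 ≤ P1 ^ 2 := sq_nonneg _
      have h11 : 0 ≤ ((n : ℝ) * S) ^ 2 := sq_nonneg _
      nlinarith [sq_nonneg P1, mul_nonneg (mul_nonneg (by positivity : (0:ℝ) ≤ (m:ℝ)) hP2pos.le) h11]
    calc P2 ^ 4 ≤ (P1 * P3) ^ 2 := h6
      _ = P1 ^ 2 * P3 ^ 2 := h7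
      _ ≤ ((m : ℝ) * P2) * ((n : ℝ) * S) ^ 2 := h8
  have h12 : P2 ^ 3 ≤ (m : ℝ) * ((n : ℝ) * S) ^ 2 := by
    have := h5
    nlinarith [hP2pos]
  -- (S/2)^3 ≤ P2^3 gives S ≤ 8 m n², contradiction with S > 4 m³ n² and m ≥ 2
  have h13 : (S / 2) ^ 3 ≤ P2 ^ 3 := by
    apply pow_le_pow_left₀ (by positivity) hP2ge
  have hA : S ^ 3 ≤ 8 * (m:ℝ) * (n:ℝ)^2 * S^2 := by nlinarith [h12, h13]
  have hB : S ≤ 8 * (m:ℝ) * (n:ℝ)^2 := by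
    have hS2 : 0 < S ^ 2 := by positivity
    nlinarith [hA, hS2]
  have hC : 16 * (m:ℝ) * (n:ℝ)^2 ≤ 4 * (m:ℝ)^3 * (n:ℝ)^2 := by
    have hmsq : (0:ℝ) ≤ (m:ℝ)^2 - 4 := by nlinarith
    have h0 : (0:ℝ) ≤ 4 * (m:ℝ) * (n:ℝ)^2 * ((m:ℝ)^2 - 4) := by positivity
    nlinarith [h0]
  have hD : (0:ℝ) ≤ 8 * (m:ℝ) * (n:ℝ)^2 := by positivity
  linarith [hcon, hB, hC, hD]
end

section
/- Let K = {x ∈ ℝ^n : Ax ≥ b} be a bounded polytope with nonempty interior (A ∈ ℝ^{m×n} with rows a_1ᵀ,…,a_mᵀ, b ∈ ℝ^m, A of rank n), and let x be an interior point of K. Then (1/(4m)) · H(x) ⪯ Q(x) ⪯ H(x), and moreover (min_{i∈[m]} σ_i(x)) · H(x) ⪯ Q(x), where M ⪯ N means N − M is positive semidefinite. (Equivalently, the largest λ with Q(x) ⪰ λ H(x) satisfies 1/(4m) ≤ λ and λ ≥ min_i σ_i(x), and λ ≤ 1.) -/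
open Matrix

/-- The leverage scores `σᵢ(x) = aᵢᵀ H(x)⁻¹ aᵢ / (aᵢᵀ x - bᵢ)²`. -/
noncomputable def lev {m n : ℕ} (A : Matrix (Fin m) (Fin n) ℝ) (b : Fin m → ℝ)
    (x : Fin n → ℝ) (i : Fin m) : ℝ :=
  (A i ⬝ᵥ (Hmat A b x)⁻¹ *ᵥ A i) / (A i ⬝ᵥ x - b i) ^ 2

/-- The matrix `Q(x) = ∑ i, σᵢ(x) aᵢ aᵢᵀ / (aᵢᵀ x - bᵢ)²`. -/
noncomputable def Qmat {m n : ℕ} (A : Matrix (Fin m) (Fin n) ℝ) (b : Fin m → ℝ)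
    (x : Fin n → ℝ) : Matrix (Fin n) (Fin n) ℝ :=
  ∑ i, (lev A b x i / (A i ⬝ᵥ x - b i) ^ 2) • Matrix.vecMulVec (A i) (A i)

/- ### Auxiliary lemmas -/

lemma aux_sum_mulVec {m n : ℕ} (M : Fin m → Matrix (Fin n) (Fin n) ℝ) (v : Fin n → ℝ) :
    (∑ i, M i) *ᵥ v = ∑ i, M i *ᵥ v := by
  ext j
  simp only [mulVec, dotProduct, Finset.sum_apply, Matrix.sum_apply, Finset.sum_mul]
  exact Finset.sum_comm

lemma aux_dotProduct_sum {m n : ℕ} (v : Fin n → ℝ) (w : Fin m → Fin n → ℝ) :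
    v ⬝ᵥ (∑ i, w i) = ∑ i, v ⬝ᵥ w i := by
  simp only [dotProduct, Finset.sum_apply, Finset.mul_sum]
  exact Finset.sum_comm

lemma aux_vecMulVec_quad {n : ℕ} (a v : Fin n → ℝ) :
    v ⬝ᵥ (vecMulVec a a) *ᵥ v = (a ⬝ᵥ v) ^ 2 := by
  simp only [vecMulVec, mulVec, dotProduct, Matrix.of_apply, sq, Finset.mul_sum,
    Finset.sum_mul]
  refine Finset.sum_congr rfl fun i _ => Finset.sum_congr rfl fun j _ => by ring

lemma aux_quad_sum {m n : ℕ} (A : Matrix (Fin m) (Fin n) ℝ) (c : Fin m → ℝ) (v : Fin n → ℝ) :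
    v ⬝ᵥ (∑ i, c i • vecMulVec (A i) (A i)) *ᵥ v = ∑ i, c i * (A i ⬝ᵥ v)^2 := by
  rw [aux_sum_mulVec, aux_dotProduct_sum]
  refine Finset.sum_congr rfl fun i _ => ?_
  rw [smul_mulVec, dotProduct_smul, ← aux_vecMulVec_quad (A i) v]
  simp [smul_eq_mul]

lemma aux_isHermitian_sum {m n : ℕ} (A : Matrix (Fin m) (Fin n) ℝ) (c : Fin m → ℝ) :
    (∑ i, c i • vecMulVec (A i) (A i)).IsHermitian := by
  unfold Matrix.IsHermitian
  ext i j
  simp [Matrix.conjTranspose_apply, Matrix.sum_apply, Matrix.vecMulVec_apply, mul_comm,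
    mul_left_comm]

lemma aux_star_id {n : ℕ} (v : Fin n → ℝ) : star v = v := rfl

lemma aux_hermitian_symm {n : ℕ} {H : Matrix (Fin n) (Fin n) ℝ} (h : H.IsHermitian)
    (v w : Fin n → ℝ) : v ⬝ᵥ H *ᵥ w = w ⬝ᵥ H *ᵥ v := by
  have hsym : ∀ i j, H i j = H j i := fun i j => by
    conv_lhs => rw [← h]
    simp [Matrix.conjTranspose_apply]
  simp only [mulVec, dotProduct, Finset.mul_sum]
  rw [Finset.sum_comm]
  exact Finset.sum_congr rfl fun i _ => Finset.sum_congr rfl fun j _ => by rw [hsym i j]; ring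

lemma aux_quad_expand {n : ℕ} (H : Matrix (Fin n) (Fin n) ℝ) (v w : Fin n → ℝ) (t : ℝ) :
    (v - t • w) ⬝ᵥ H *ᵥ (v - t • w) =
      v ⬝ᵥ H *ᵥ v - t * (v ⬝ᵥ H *ᵥ w) - t * (w ⬝ᵥ H *ᵥ v) + t * t * (w ⬝ᵥ H *ᵥ w) := by
  rw [Matrix.mulVec_sub, Matrix.mulVec_smul]
  simp only [sub_dotProduct, dotProduct_sub, smul_dotProduct, dotProduct_smul, smul_eq_mul]
  ring

/-- `H(x)` is positive definite. -/
lemma Hmat_posDef {m n : ℕ} (A : Matrix (Fin m) (Fin n) ℝ) (b : Fin m → ℝ)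
    (hrank : A.rank = n) (x : Fin n → ℝ) (hx : ∀ i, A i ⬝ᵥ x > b i) :
    (Hmat A b x).PosDef := by
  have hker : ∀ v : Fin n → ℝ, A *ᵥ v = 0 → v = 0 := by
    have h1 : Module.finrank ℝ (LinearMap.ker A.mulVecLin) = 0 := by
      have h2 := LinearMap.finrank_range_add_finrank_ker A.mulVecLin
      rw [Module.finrank_fin_fun] at h2
      have h3 : A.rank = Module.finrank ℝ (LinearMap.range A.mulVecLin) := rfl
      omega
    have h4 : LinearMap.ker A.mulVecLin = ⊥ := Submodule.finrank_eq_zero.mp h1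
    intro v hv
    have : v ∈ LinearMap.ker A.mulVecLin := by
      simpa [LinearMap.mem_ker, Matrix.mulVecLin_apply] using hv
    rw [h4] at this
    simpa using this
  refine posDef_iff_dotProduct_mulVec.mpr ⟨aux_isHermitian_sum A _, fun v hv => ?_⟩
  rw [aux_star_id, Hmat, aux_quad_sum]
  have hex : ∃ i, A i ⬝ᵥ v ≠ 0 := by
    by_contra hno
    push_neg at hno
    exact hv (hker v (funext fun i => hno i))
  obtain ⟨i0, hi0⟩ := hex
  have hterm : ∀ i, 0 ≤ ((A i ⬝ᵥ x - b i) ^ 2)⁻¹ * (A i ⬝ᵥ v) ^ 2 := fun i => by positivity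
  have hpos : 0 < ((A i0 ⬝ᵥ x - b i0) ^ 2)⁻¹ * (A i0 ⬝ᵥ v) ^ 2 := by
    have hs : 0 < A i0 ⬝ᵥ x - b i0 := sub_pos.mpr (hx i0)
    positivity
  exact Finset.sum_pos' (fun i _ => hterm i) ⟨i0, Finset.mem_univ i0, hpos⟩

lemma aux_herm_sub_smul {n : ℕ} {M N : Matrix (Fin n) (Fin n) ℝ} (hM : M.IsHermitian)
    (hN : N.IsHermitian) (r : ℝ) : (M - r • N).IsHermitian := by
  unfold Matrix.IsHermitian at *
  ext i j
  have h1 := congr_fun (congr_fun hM i) j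
  have h2 := congr_fun (congr_fun hN i) j
  simp only [Matrix.conjTranspose_apply, Matrix.sub_apply, Matrix.smul_apply, star_trivial,
    smul_eq_mul] at *
  rw [h1, h2]

lemma aux_quad_sub {n : ℕ} (M N : Matrix (Fin n) (Fin n) ℝ) (r : ℝ) (v : Fin n → ℝ) :
    v ⬝ᵥ (M - r • N) *ᵥ v = v ⬝ᵥ M *ᵥ v - r * (v ⬝ᵥ N *ᵥ v) := by
  rw [Matrix.sub_mulVec, dotProduct_sub, smul_mulVec, dotProduct_smul, smul_eq_mul]

/-- For a bounded full-dimensional polytope `{x | Ax ≥ b}` with nonempty interior and any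
interior point `x`, `(1/(4m)) H(x) ⪯ Q(x) ⪯ H(x)` and `(minᵢ σᵢ(x)) H(x) ⪯ Q(x)`. -/
theorem Q_hessian_loewner_bounds {m n : ℕ} (A : Matrix (Fin m) (Fin n) ℝ)
    (b : Fin m → ℝ) (hrank : A.rank = n)
    (hbd : Bornology.IsBounded {x : Fin n → ℝ | ∀ i, A i ⬝ᵥ x ≥ b i})
    (x : Fin n → ℝ) (hx : ∀ i, A i ⬝ᵥ x > b i) :
    (Qmat A b x - (4 * (m : ℝ))⁻¹ • Hmat A b x).PosSemidef ∧
    (Hmat A b x - Qmat A b x).PosSemidef ∧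
    (Qmat A b x - (⨅ i : Fin m, lev A b x i) • Hmat A b x).PosSemidef := by
  classical
  have hH : (Hmat A b x).PosDef := Hmat_posDef A b hrank x hx
  have hHsym : (Hmat A b x).IsHermitian := hH.1
  have hdet : IsUnit (Hmat A b x).det := hH.det_pos.ne'.isUnit
  have hHinv_psd : ((Hmat A b x)⁻¹).PosSemidef := (Matrix.posDef_inv_iff.mpr hH).posSemidef
  have hHH : ∀ a : Fin n → ℝ, Hmat A b x *ᵥ ((Hmat A b x)⁻¹ *ᵥ a) = a := by
    intro a
    rw [Matrix.mulVec_mulVec, Matrix.mul_nonsing_inv _ hdet, Matrix.one_mulVec]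
  set c : Fin m → ℝ := fun i => ((A i ⬝ᵥ x - b i) ^ 2)⁻¹ with hcdef
  set q : Fin m → ℝ := fun i => A i ⬝ᵥ (Hmat A b x)⁻¹ *ᵥ A i with hqdef
  have hc : ∀ i, 0 < c i := by
    intro i
    have hs : 0 < A i ⬝ᵥ x - b i := sub_pos.mpr (hx i)
    rw [hcdef]
    positivity
  have hq0 : ∀ i, 0 ≤ q i := by
    intro i
    have := hHinv_psd.dotProduct_mulVec_nonneg (A i)
    rwa [aux_star_id] at this
  have hlev : ∀ i, lev A b x i = q i * c i := by
    intro i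
    rw [lev, div_eq_mul_inv, hqdef, hcdef]
  have hlev0 : ∀ i, 0 ≤ lev A b x i := by
    intro i
    rw [hlev i]
    exact mul_nonneg (hq0 i) (hc i).le
  have hHq : ∀ v : Fin n → ℝ, v ⬝ᵥ Hmat A b x *ᵥ v = ∑ i, c i * (A i ⬝ᵥ v) ^ 2 := by
    intro v
    rw [Hmat]
    exact aux_quad_sum A c v
  have hQq : ∀ v : Fin n → ℝ,
      v ⬝ᵥ Qmat A b x *ᵥ v = ∑ i, lev A b x i * c i * (A i ⬝ᵥ v) ^ 2 := by
    intro v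
    rw [Qmat, aux_quad_sum A (fun i => lev A b x i / (A i ⬝ᵥ x - b i) ^ 2) v]
    refine Finset.sum_congr rfl fun i _ => ?_
    rw [div_eq_mul_inv, hcdef]
  -- Cauchy–Schwarz in the H-inner product
  have hww : ∀ i, ((Hmat A b x)⁻¹ *ᵥ A i) ⬝ᵥ Hmat A b x *ᵥ ((Hmat A b x)⁻¹ *ᵥ A i) = q i := by
    intro i
    rw [hHH]
    exact dotProduct_comm _ _
  have hCS : ∀ (i : Fin m) (v : Fin n → ℝ),
      (A i ⬝ᵥ v) ^ 2 ≤ q i * (v ⬝ᵥ Hmat A b x *ᵥ v) := by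
    intro i v
    set w : Fin n → ℝ := (Hmat A b x)⁻¹ *ᵥ A i with hwdef
    have hvw : v ⬝ᵥ Hmat A b x *ᵥ w = A i ⬝ᵥ v := by
      rw [hwdef, hHH, dotProduct_comm]
    have hwv : w ⬝ᵥ Hmat A b x *ᵥ v = A i ⬝ᵥ v := by
      rw [aux_hermitian_symm hHsym, hvw]
    have hkey : ∀ t : ℝ, 0 ≤ q i * (t * t) + -(2 * (A i ⬝ᵥ v)) * t + v ⬝ᵥ Hmat A b x *ᵥ v := by
      intro t
      have h0 := hH.posSemidef.dotProduct_mulVec_nonneg (v - t • w)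
      rw [aux_star_id, aux_quad_expand, hvw, hwv, hww i] at h0
      linarith
    have hd := discrim_le_zero hkey
    rw [discrim] at hd
    nlinarith [hd]
  -- leverage scores are at most one
  have hlev_le : ∀ i, lev A b x i ≤ 1 := by
    intro i
    set w : Fin n → ℝ := (Hmat A b x)⁻¹ *ᵥ A i with hwdef
    have hAw : A i ⬝ᵥ w = q i := rfl
    have h1 : c i * (A i ⬝ᵥ w) ^ 2 ≤ w ⬝ᵥ Hmat A b x *ᵥ w := by
      rw [hHq w]
      exact Finset.single_le_sum (f := fun j => c j * (A j ⬝ᵥ w) ^ 2)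
        (fun j _ => by positivity) (Finset.mem_univ i)
    rw [hAw, hww i] at h1
    rcases (hq0 i).eq_or_lt with h | h
    · rw [hlev i, ← h, zero_mul]; exact zero_le_one
    · rw [hlev i]
      nlinarith [hc i]
  have hHherm : (Hmat A b x).IsHermitian := hHsym
  have hQherm : (Qmat A b x).IsHermitian := by
    rw [Qmat]; exact aux_isHermitian_sum A _
  refine ⟨posSemidef_iff_dotProduct_mulVec.mpr ⟨aux_herm_sub_smul hQherm hHherm _, ?_⟩,
    posSemidef_iff_dotProduct_mulVec.mpr ⟨by simpa using aux_herm_sub_smul hHherm hQherm 1, ?_⟩,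
    posSemidef_iff_dotProduct_mulVec.mpr ⟨aux_herm_sub_smul hQherm hHherm _, ?_⟩⟩
  · -- Q - (4m)⁻¹ H ⪰ 0
    intro v
    rw [aux_star_id, aux_quad_sub, hHq, hQq, sub_nonneg]
    set hv : ℝ := ∑ i, c i * (A i ⬝ᵥ v) ^ 2 with hvdef
    set Qv : ℝ := ∑ i, lev A b x i * c i * (A i ⬝ᵥ v) ^ 2 with hQvdef
    have hQnn : 0 ≤ Qv := Finset.sum_nonneg fun i _ => by
      have := hlev0 i
      positivity
    have hvnn : 0 ≤ hv := Finset.sum_nonneg fun i _ => by positivity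
    have hterm : ∀ i, (c i * (A i ⬝ᵥ v) ^ 2) ^ 2 ≤ lev A b x i * c i * (A i ⬝ᵥ v) ^ 2 * hv := by
      intro i
      have h1 : (c i) ^ 2 * (A i ⬝ᵥ v) ^ 2 * (A i ⬝ᵥ v) ^ 2 ≤
          (c i) ^ 2 * (A i ⬝ᵥ v) ^ 2 * (q i * (v ⬝ᵥ Hmat A b x *ᵥ v)) := by
        refine mul_le_mul_of_nonneg_left (hCS i v) (by positivity)
      rw [hHq v] at h1
      rw [hlev i]
      nlinarith [h1]
    have hsum2 : ∑ i, (c i * (A i ⬝ᵥ v) ^ 2) ^ 2 ≤ Qv * hv := by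
      rw [hQvdef, Finset.sum_mul]
      exact Finset.sum_le_sum fun i _ => hterm i
    have hcheb : hv ^ 2 ≤ (m : ℝ) * ∑ i, (c i * (A i ⬝ᵥ v) ^ 2) ^ 2 := by
      have := sq_sum_le_card_mul_sum_sq (s := (Finset.univ : Finset (Fin m)))
        (f := fun i => c i * (A i ⬝ᵥ v) ^ 2)
      simpa [hvdef] using this
    rcases hvnn.eq_or_lt with h0 | h0
    · rw [← h0]; simpa using hQnn
    · have hm : 0 < (m : ℝ) := by
        rcases Nat.eq_zero_or_pos m with hm0 | hm0
        · exfalso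
          subst hm0
          rw [hvdef] at h0
          simp at h0
        · exact_mod_cast hm0
      have h1 : hv ≤ (m : ℝ) * Qv := by nlinarith
      calc (4 * (m : ℝ))⁻¹ * hv ≤ (4 * (m : ℝ))⁻¹ * ((m : ℝ) * Qv) := by
            exact mul_le_mul_of_nonneg_left h1 (by positivity)
        _ = Qv / 4 := by field_simp
        _ ≤ Qv := by linarith
  · -- H - Q ⪰ 0
    intro v
    rw [aux_star_id]
    have : Hmat A b x - Qmat A b x = Hmat A b x - (1 : ℝ) • Qmat A b x := by rw [one_smul]
    rw [this, aux_quad_sub, hHq, hQq, sub_nonneg, one_mul]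
    refine Finset.sum_le_sum fun i _ => ?_
    have hnn : 0 ≤ c i * (A i ⬝ᵥ v) ^ 2 := by positivity
    rw [mul_assoc]
    exact le_trans (mul_le_mul_of_nonneg_right (hlev_le i) hnn) (by rw [one_mul])
  · -- Q - (min lev) H ⪰ 0
    intro v
    rw [aux_star_id, aux_quad_sub, hHq, hQq, sub_nonneg, Finset.mul_sum]
    refine Finset.sum_le_sum fun i _ => ?_
    have hinf : (⨅ j, lev A b x j) ≤ lev A b x i :=
      ciInf_le (Set.Finite.bddBelow (Set.finite_range _)) i
    have hnn : 0 ≤ c i * (A i ⬝ᵥ v) ^ 2 := by positivity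
    rw [mul_assoc]
    exact mul_le_mul_of_nonneg_right hinf hnn
end
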